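/- Let K be a kernel on ℝ^d satisfying (K0)–(K2), and assume μ₄ > μ₂₂ > 0 (which holds automatically for such kernels when d ≥ 2). Then η := μ₄ + (d−1)μ₂₂ − d satisfies d·η = ∫ K(z)(‖z‖² − d)² dz > 0, and the linear operator J : H → H is bijective with inverse J^{−1}(c,b,A) = ( c − η^{−1} tr(A_o), b, (A_o − (μ₂₂ − 1) η^{−1} tr(A_o) I_d) ⊘ M ), where A_o := A − c I_d and ⊘ denotes entrywise division. -/

import Mathlib

open MeasureTheory Filter Topology

noncomputable section

/-- `ℝ^d` as a pi type; `volume` is `d`-dimensional Lebesgue measure. -/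
abbrev Vec (d : ℕ) := Fin d → ℝ

/-- The Euclidean norm on `ℝ^d`. -/
def euclNorm {d : ℕ} (z : Vec d) : ℝ := Real.sqrt (∑ i, z i ^ 2)

/-- The space `H = ℝ × ℝ^d × ℝ^{d×d}` (symmetric matrices sit inside the third factor). -/
abbrev Htriple (d : ℕ) := ℝ × Vec d × (Fin d → Fin d → ℝ)

/-- The matrix `M` with `M_jj = (μ₄ - μ₂₂)/2`, `M_jk = μ₂₂` for `j ≠ k`. -/
def Mmat (d : ℕ) (μ4 μ22 : ℝ) : Fin d → Fin d → ℝ :=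
  fun j k => if j = k then (μ4 - μ22) / 2 else μ22

/-- The linear operator `J(c,b,A) = (c + tr A/2, b, c I + A ⊙ M + (μ₂₂/2) tr A · I)`. -/
def Jop {d : ℕ} (μ4 μ22 : ℝ) (v : Htriple d) : Htriple d :=
  (v.1 + (∑ i, v.2.2 i i) / 2, v.2.1,
    fun j k => (if j = k then v.1 else 0) + v.2.2 j k * Mmat d μ4 μ22 j k +
      (if j = k then μ22 / 2 * ∑ i, v.2.2 i i else 0))

/-- The claimed inverse `J⁻¹(c,b,A) = (c - η⁻¹ tr A₀, b, (A₀ - (μ₂₂-1) η⁻¹ tr A₀ · I) ⊘ M)`,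
where `A₀ = A - c I` and `⊘` is entrywise division. -/
def Jinv {d : ℕ} (μ4 μ22 η : ℝ) (v : Htriple d) : Htriple d :=
  (v.1 - η⁻¹ * ∑ i, (v.2.2 i i - v.1), v.2.1,
    fun j k =>
      ((v.2.2 j k - if j = k then v.1 else 0) -
        (if j = k then (μ22 - 1) * η⁻¹ * ∑ i, (v.2.2 i i - v.1) else 0)) /
      Mmat d μ4 μ22 j k)

lemma jinv_jop {d : ℕ} (μ4 μ22 η : ℝ) (hη : η = μ4 + (d - 1) * μ22 - d)
    (hηne : η ≠ 0) (hM : μ4 - μ22 ≠ 0) (h22 : μ22 ≠ 0) (v : Htriple d) :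
    Jinv μ4 μ22 η (Jop μ4 μ22 v) = v := by
  obtain ⟨c, b, A⟩ := v
  have hM2 : (μ4 - μ22) / 2 ≠ 0 := div_ne_zero hM two_ne_zero
  simp only [Jop, Jinv, Mmat, eq_self_iff_true, if_true, Prod.mk.injEq]
  have key : (∑ x : Fin d, (c + A x x * ((μ4 - μ22) / 2) + μ22 / 2 * ∑ x : Fin d, A x x
      - (c + (∑ x : Fin d, A x x) / 2))) = η * (∑ x : Fin d, A x x) / 2 := by
    have e : ∀ x : Fin d, c + A x x * ((μ4 - μ22) / 2) + μ22 / 2 * (∑ x : Fin d, A x x)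
        - (c + (∑ x : Fin d, A x x) / 2)
        = ((μ4 - μ22) / 2) * A x x + ((μ22 - 1) / 2) * ∑ x : Fin d, A x x := fun x => by ring
    rw [Finset.sum_congr rfl fun x _ => e x, Finset.sum_add_distrib, ← Finset.mul_sum,
      Finset.sum_const, Finset.card_univ, Fintype.card_fin, nsmul_eq_mul, hη]
    ring
  rw [key]
  refine ⟨by field_simp; ring, trivial, ?_⟩
  funext j k
  by_cases h : j = k
  · subst h
    simp only [eq_self_iff_true, if_true]
    field_simp
    ring
  · simp only [if_neg h]
    field_simp
    ring

lemma jop_jinv {d : ℕ} (μ4 μ22 η : ℝ) (hη : η = μ4 + (d - 1) * μ22 - d)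
    (hηne : η ≠ 0) (hM : μ4 - μ22 ≠ 0) (h22 : μ22 ≠ 0) (v : Htriple d) :
    Jop μ4 μ22 (Jinv μ4 μ22 η v) = v := by
  obtain ⟨c, b, A⟩ := v
  have hM2 : (μ4 - μ22) / 2 ≠ 0 := div_ne_zero hM two_ne_zero
  simp only [Jop, Jinv, Mmat, eq_self_iff_true, if_true, Prod.mk.injEq]
  have key : (∑ x : Fin d, (A x x - c - (μ22 - 1) * η⁻¹ * ∑ x : Fin d, (A x x - c)) / ((μ4 - μ22) / 2))
      = 2 * (∑ x : Fin d, (A x x - c)) / η := by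
    have e : ∀ x : Fin d, (A x x - c - (μ22 - 1) * η⁻¹ * ∑ x : Fin d, (A x x - c)) / ((μ4 - μ22) / 2)
        = (2 / (μ4 - μ22)) * (A x x - c)
          + (-(2 * (μ22 - 1) * η⁻¹ / (μ4 - μ22))) * ∑ x : Fin d, (A x x - c) := fun x => by
      field_simp
      ring
    rw [Finset.sum_congr rfl fun x _ => e x, Finset.sum_add_distrib, ← Finset.mul_sum,
      Finset.sum_const, Finset.card_univ, Fintype.card_fin, nsmul_eq_mul]
    field_simp
    rw [hη]
    ring
  rw [key]
  refine ⟨by field_simp; ring, trivial, ?_⟩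
  funext j k
  by_cases h : j = k
  · subst h
    simp only [eq_self_iff_true, if_true]
    field_simp
    ring
  · simp only [if_neg h, sub_zero]
    field_simp
    ring

/-- `d·η = ∫ K(z)(‖z‖²-d)² dz > 0`, and `J` is bijective with the
explicit inverse `Jinv`. -/
theorem statement2 {d : ℕ} (hd : 1 ≤ d)
    (K : Vec d → ℝ) (hKmeas : Measurable K) (hKpos : ∀ z, 0 ≤ K z)
    (hKbd : ∃ C : ℝ, ∀ z, K z ≤ C)
    (hKmom : ∀ r : ℝ, 0 < r → Integrable (fun z => K z * euclNorm z ^ r))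
    (hK0 : (∫ z : Vec d, K z) = 1)
    (hK1 : ∀ (ξ : Vec d), (∀ i, ξ i = 1 ∨ ξ i = -1) → ∀ (σ : Equiv.Perm (Fin d)),
      ∀ z : Vec d, K z = K fun i => ξ i * z (σ i))
    (hK2 : ∀ i j : Fin d, (∫ z : Vec d, K z * z i * z j) = if i = j then 1 else 0)
    (μ4 μ22 : ℝ)
    (hμ4 : ∀ i : Fin d, μ4 = ∫ z : Vec d, K z * z i ^ 4)
    (hμ22 : ∀ i j : Fin d, i ≠ j → μ22 = ∫ z : Vec d, K z * z i ^ 2 * z j ^ 2)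
    (hμ22' : d = 1 → μ22 = 1)
    (hμgt : μ22 < μ4) (hμpos : 0 < μ22)
    (η : ℝ) (hη : η = μ4 + (d - 1) * μ22 - d) :
    ((d : ℝ) * η = ∫ z : Vec d, K z * (euclNorm z ^ 2 - d) ^ 2) ∧
      (0 < (d : ℝ) * η) ∧
      Function.Bijective (Jop μ4 μ22 : Htriple d → Htriple d) ∧
      Function.LeftInverse (Jinv μ4 μ22 η : Htriple d → Htriple d) (Jop μ4 μ22) ∧
      Function.RightInverse (Jinv μ4 μ22 η : Htriple d → Htriple d) (Jop μ4 μ22) := by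
  classical
  have hS : ∀ z : Vec d, euclNorm z ^ 2 = ∑ i, z i ^ 2 := fun z =>
    Real.sq_sqrt (by positivity)
  have hzmeas : ∀ i : Fin d, Measurable fun z : Vec d => z i := fun i => measurable_pi_apply i
  have hKint : Integrable K := by
    by_contra h
    rw [integral_undef h] at hK0
    exact one_ne_zero hK0.symm
  -- moment integrability
  have hmom4 : Integrable (fun z : Vec d => K z * (∑ i, z i ^ 2) ^ 2) := by
    have h := hKmom 4 (by norm_num)
    have e : (fun z : Vec d => K z * euclNorm z ^ (4 : ℝ))
        = fun z => K z * (∑ i, z i ^ 2) ^ 2 := by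
      funext z
      rw [show (4 : ℝ) = ((4 : ℕ) : ℝ) by norm_num, Real.rpow_natCast]
      rw [show euclNorm z ^ (4 : ℕ) = (euclNorm z ^ 2) ^ 2 by ring, hS z]
    rwa [e] at h
  have hmom2 : Integrable (fun z : Vec d => K z * (∑ i, z i ^ 2)) := by
    have h := hKmom 2 (by norm_num)
    have e : (fun z : Vec d => K z * euclNorm z ^ (2 : ℝ))
        = fun z => K z * (∑ i, z i ^ 2) := by
      funext z
      rw [show (2 : ℝ) = ((2 : ℕ) : ℝ) by norm_num, Real.rpow_natCast, hS z]
    rwa [e] at h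
  have hsq_le : ∀ (z : Vec d) (i : Fin d), z i ^ 2 ≤ ∑ k, z k ^ 2 := fun z i =>
    Finset.single_le_sum (fun k _ => sq_nonneg (z k)) (Finset.mem_univ i)
  have hint22 : ∀ i j : Fin d, Integrable (fun z : Vec d => K z * z i ^ 2 * z j ^ 2) := by
    intro i j
    refine hmom4.mono
      (((hKmeas.mul ((hzmeas i).pow_const 2)).mul ((hzmeas j).pow_const 2)).aestronglyMeasurable)
      (ae_of_all _ fun z => ?_)
    have hSnn : (0 : ℝ) ≤ ∑ k, z k ^ 2 := by positivity
    rw [Real.norm_eq_abs, Real.norm_eq_abs,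
      abs_of_nonneg (mul_nonneg (mul_nonneg (hKpos z) (sq_nonneg _)) (sq_nonneg _)),
      abs_of_nonneg (mul_nonneg (hKpos z) (by positivity))]
    nlinarith [hsq_le z i, hsq_le z j, hKpos z, mul_le_mul_of_nonneg_left (hsq_le z i) (hKpos z),
      mul_le_mul_of_nonneg_left (hsq_le z j) (mul_nonneg (hKpos z) hSnn)]
  have hint2 : ∀ i : Fin d, Integrable (fun z : Vec d => K z * z i ^ 2) := by
    intro i
    refine hmom2.mono ((hKmeas.mul ((hzmeas i).pow_const 2)).aestronglyMeasurable)
      (ae_of_all _ fun z => ?_)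
    rw [Real.norm_eq_abs, Real.norm_eq_abs,
      abs_of_nonneg (mul_nonneg (hKpos z) (sq_nonneg _)),
      abs_of_nonneg (mul_nonneg (hKpos z) (by positivity))]
    exact mul_le_mul_of_nonneg_left (hsq_le z i) (hKpos z)
  -- second moment integral
  have hI2 : (∫ z : Vec d, K z * (∑ i, z i ^ 2)) = d := by
    have e : (fun z : Vec d => K z * ∑ i, z i ^ 2) = fun z => ∑ i, K z * z i * z i := by
      funext z
      rw [Finset.mul_sum]
      exact Finset.sum_congr rfl fun i _ => by ring
    rw [e, integral_finset_sum _ (fun i _ => by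
      have e2 : (fun z : Vec d => K z * z i * z i) = fun z => K z * z i ^ 2 := by
        funext z; ring
      rw [e2]; exact hint2 i)]
    simp [hK2, Finset.sum_const, Finset.card_univ]
  -- fourth moment integral
  have hval : ∀ i j : Fin d, (∫ z : Vec d, K z * z i ^ 2 * z j ^ 2)
      = if i = j then μ4 else μ22 := by
    intro i j
    by_cases h : i = j
    · subst h
      rw [if_pos rfl]
      have e2 : (fun z : Vec d => K z * z i ^ 2 * z i ^ 2) = fun z => K z * z i ^ 4 := by
        funext z; ring
      rw [e2]
      exact (hμ4 i).symm
    · rw [if_neg h]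
      exact (hμ22 i j h).symm
  have hI4 : (∫ z : Vec d, K z * (∑ i, z i ^ 2) ^ 2) = d * μ4 + d * (d - 1) * μ22 := by
    have e : (fun z : Vec d => K z * (∑ i, z i ^ 2) ^ 2)
        = fun z => ∑ i, ∑ j, K z * z i ^ 2 * z j ^ 2 := by
      funext z
      rw [sq, Finset.sum_mul_sum, Finset.mul_sum]
      refine Finset.sum_congr rfl fun i _ => ?_
      rw [Finset.mul_sum]
      exact Finset.sum_congr rfl fun j _ => by ring
    rw [e, integral_finset_sum _ (fun i _ => integrable_finset_sum _ (fun j _ => hint22 i j))]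
    have e3 : ∀ i : Fin d, (∫ z : Vec d, ∑ j, K z * z i ^ 2 * z j ^ 2)
        = μ4 + ((d : ℝ) - 1) * μ22 := by
      intro i
      rw [integral_finset_sum _ (fun j _ => hint22 i j)]
      rw [Finset.sum_congr rfl fun j _ => hval i j]
      have e4 : ∀ j : Fin d, (if i = j then μ4 else μ22)
          = μ22 + (if i = j then μ4 - μ22 else 0) := fun j => by split <;> ring
      rw [Finset.sum_congr rfl fun j _ => e4 j, Finset.sum_add_distrib, Finset.sum_const,
        Finset.sum_ite_eq, if_pos (Finset.mem_univ i), Finset.card_univ, Fintype.card_fin,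
        nsmul_eq_mul]
      ring
    rw [Finset.sum_congr rfl fun i _ => e3 i, Finset.sum_const, Finset.card_univ,
      Fintype.card_fin, nsmul_eq_mul]
    ring
  -- expansion
  have e : (fun z : Vec d => K z * (euclNorm z ^ 2 - d) ^ 2)
      = fun z => K z * (∑ i, z i ^ 2) ^ 2 - 2 * d * (K z * (∑ i, z i ^ 2)) + (d : ℝ) ^ 2 * K z := by
    funext z
    rw [hS z]
    ring
  have f2 : Integrable (fun z : Vec d => 2 * (d : ℝ) * (K z * (∑ i, z i ^ 2))) :=
    hmom2.const_mul _
  have f3 : Integrable (fun z : Vec d => (d : ℝ) ^ 2 * K z) := hKint.const_mul _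
  have hintg : Integrable (fun z : Vec d => K z * (euclNorm z ^ 2 - d) ^ 2) := by
    rw [e]; exact (hmom4.sub f2).add f3
  have fsub : Integrable (fun z : Vec d => K z * (∑ i, z i ^ 2) ^ 2
      - 2 * (d : ℝ) * (K z * (∑ i, z i ^ 2))) := hmom4.sub f2
  have hmain : (d : ℝ) * η = ∫ z : Vec d, K z * (euclNorm z ^ 2 - d) ^ 2 := by
    rw [e, integral_add fsub f3, integral_sub hmom4 f2, integral_const_mul,
      integral_const_mul, hI4, hI2, hK0, hη]
    ring
  have hpos : 0 < (d : ℝ) * η := by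
    -- sphere is null
    have hm : MeasurableSet {z : Vec d | (∑ i, z i ^ 2) = (d : ℝ)} :=
      measurableSet_eq_fun (by fun_prop) measurable_const
    have hsphere : volume {z : Vec d | (∑ i, z i ^ 2) = (d : ℝ)} = 0 := by
      haveI : Nonempty (Fin d) := ⟨⟨0, hd⟩⟩
      haveI : Nontrivial (EuclideanSpace ℝ (Fin d)) := by
        refine nontrivial_of_ne (EuclideanSpace.single (⟨0, hd⟩ : Fin d) (1 : ℝ)) 0 fun h => ?_
        have h1 : ‖EuclideanSpace.single (⟨0, hd⟩ : Fin d) (1 : ℝ)‖ = 1 := by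
          simp [EuclideanSpace.norm_single]
        rw [h, norm_zero] at h1
        norm_num at h1
      have hmp := EuclideanSpace.volume_preserving_symm_measurableEquiv_toLp (Fin d)
      have hset : (⇑(MeasurableEquiv.toLp 2 (Fin d → ℝ)).symm) ⁻¹' {z : Vec d | (∑ i, z i ^ 2) = (d : ℝ)}
          = Metric.sphere (0 : EuclideanSpace ℝ (Fin d)) (Real.sqrt d) := by
        ext x
        simp only [Set.mem_preimage, Set.mem_setOf_eq, Metric.mem_sphere, dist_zero_right,
          EuclideanSpace.norm_eq, Real.norm_eq_abs, sq_abs]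
        rw [show ∑ i, (MeasurableEquiv.toLp 2 (Fin d → ℝ)).symm x i ^ 2 = ∑ i, x i ^ 2 from rfl]
        exact (Real.sqrt_inj (by positivity) (Nat.cast_nonneg d)).symm
      rw [← hmp.measure_preimage hm.nullMeasurableSet, hset, Measure.addHaar_sphere]
    -- strict positivity
    have hnn : 0 ≤ (d : ℝ) * η := by
      rw [hmain]
      exact integral_nonneg fun z => mul_nonneg (hKpos z) (sq_nonneg _)
    rcases hnn.lt_or_eq with h | h
    · exact h
    · exfalso
      have hg : (fun z : Vec d => K z * (euclNorm z ^ 2 - d) ^ 2) =ᵐ[volume] 0 :=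
        (integral_eq_zero_iff_of_nonneg (fun z => mul_nonneg (hKpos z) (sq_nonneg _)) hintg).mp (by rw [← hmain, ← h])
      have hA : ∀ᵐ z : Vec d, z ∉ {z : Vec d | (∑ i, z i ^ 2) = (d : ℝ)} :=
        (measure_eq_zero_iff_ae_notMem).mp hsphere
      have hzero : K =ᵐ[volume] 0 := by
        filter_upwards [hg, hA] with z h1 h2
        have h2' : ¬ (∑ i, z i ^ 2) = (d : ℝ) := h2
        have h1' : K z * (euclNorm z ^ 2 - d) ^ 2 = 0 := h1
        show K z = 0
        rcases mul_eq_zero.mp h1' with h3 | h3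
        · exact h3
        · exact absurd (by rw [← hS z, sub_eq_zero.mp (pow_eq_zero_iff two_ne_zero |>.mp h3)]) h2' 
      have : (∫ z : Vec d, K z) = 0 := by
        rw [integral_congr_ae hzero]
        simp
      rw [hK0] at this
      norm_num at this
  have hηne : η ≠ 0 := fun h0 => by rw [h0, mul_zero] at hpos; exact lt_irrefl 0 hpos
  have hMne : μ4 - μ22 ≠ 0 := sub_ne_zero.mpr (ne_of_gt hμgt)
  have h22ne : μ22 ≠ 0 := ne_of_gt hμpos
  have hli : Function.LeftInverse (Jinv μ4 μ22 η : Htriple d → Htriple d) (Jop μ4 μ22) :=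
    fun v => jinv_jop μ4 μ22 η hη hηne hMne h22ne v
  have hri : Function.RightInverse (Jinv μ4 μ22 η : Htriple d → Htriple d) (Jop μ4 μ22) :=
    fun v => jop_jinv μ4 μ22 η hη hηne hMne h22ne v
  exact ⟨hmain, hpos, Function.bijective_iff_has_inverse.mpr ⟨_, hli, hri⟩, hli, hri⟩
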